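/- Completeness of the path spaces: For every t ≥ 0, d_∞ is a metric on Λ̂^t = [t,∞) × 𝒟₀ and on Λ^t = [t,∞) × 𝒞₀ (in particular it is symmetric, vanishes exactly on the diagonal, and satisfies the triangle inequality), and both (Λ̂^t, d_∞) and (Λ^t, d_∞) are complete metric spaces. -/

import Mathlib

open Filter Topology MeasureTheory Matrix
open scoped RealInnerProductSpace

noncomputable section

namespace PathHJB

/-- The domain `(-∞,0]` of the paths. -/
abbrev PathDom : Type := Set.Iic (0 : ℝ)

abbrev Eucl (d : ℕ) := EuclideanSpace ℝ (Fin d)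

/-- Paths on `(-∞,0]` with values in `ℝ^d`. -/
abbrev Pth (d : ℕ) := PathDom → Eucl d

def zeroPt : PathDom := ⟨0, Set.self_mem_Iic⟩

/-- The sup norm `|x|_C`. -/
def normC {d : ℕ} (x : Pth d) : ℝ := ⨆ θ : PathDom, ‖x θ‖

/-- The shifted path `x_h`. -/
def shift {d : ℕ} (x : Pth d) (h : ℝ) : Pth d := fun θ =>
  if hθ : -h ≤ θ.1 then x zeroPt
  else x ⟨θ.1 + h, Set.mem_Iic.mpr (by push_neg at hθ; linarith)⟩

/-- The vertical perturbation `x + v · 1_{{0}}`. -/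
def vpert {d : ℕ} (x : Pth d) (v : Eucl d) : Pth d := fun θ =>
  if θ.1 = 0 then x θ + v else x θ

/-- Càdlàg: right-continuous with left limits. -/
def IsCadlag {d : ℕ} (x : Pth d) : Prop :=
  (∀ θ : PathDom, ContinuousWithinAt x {η : PathDom | θ.1 ≤ η.1} θ) ∧
  (∀ θ : PathDom, ∃ L : Eucl d, Tendsto x (nhdsWithin θ {η : PathDom | η.1 < θ.1}) (nhds L))

/-- `𝒟₀`: càdlàg paths vanishing at `-∞`. -/
def D0 (d : ℕ) : Set (Pth d) := {x | IsCadlag x ∧ Tendsto x atBot (nhds 0)}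

/-- `𝒞₀`: continuous paths vanishing at `-∞`. -/
def C0 (d : ℕ) : Set (Pth d) := {x | Continuous x ∧ Tendsto x atBot (nhds 0)}

/-- The metric `d_∞`. -/
def dInfty {d : ℕ} (p q : ℝ × Pth d) : ℝ :=
  if p.1 ≤ q.1 then |q.1 - p.1| + normC (shift p.2 (q.1 - p.1) - q.2)
  else |p.1 - q.1| + normC (shift q.2 (p.1 - q.1) - p.2)

/-- `Λ̂^t = [t,∞) × 𝒟₀`. -/
def LamHat (d : ℕ) (t : ℝ) : Set (ℝ × Pth d) := {p | t ≤ p.1 ∧ p.2 ∈ D0 d}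

/-- `Λ^t = [t,∞) × 𝒞₀`. -/
def Lam (d : ℕ) (t : ℝ) : Set (ℝ × Pth d) := {p | t ≤ p.1 ∧ p.2 ∈ C0 d}

def stdBasis (d : ℕ) (i : Fin d) : Eucl d := EuclideanSpace.single i 1

/-- Horizontal (Dupire) derivative. -/
def HasHorizDerivAt {d : ℕ} (f : ℝ × Pth d → ℝ) (p : ℝ × Pth d) (v : ℝ) : Prop :=
  Tendsto (fun h : ℝ => (f (p.1 + h, shift p.2 h) - f p) / h) (𝓝[>] (0:ℝ)) (𝓝 v)

/-- Vertical (Dupire) derivative in direction `e_i`. -/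
def HasVertDerivAt {d : ℕ} (f : ℝ × Pth d → ℝ) (p : ℝ × Pth d) (i : Fin d) (v : ℝ) : Prop :=
  Tendsto (fun h : ℝ => (f (p.1, vpert p.2 (h • stdBasis d i)) - f p) / h) (𝓝[≠] (0:ℝ)) (𝓝 v)

/-- Continuity on a set w.r.t. `d_∞`. -/
def DContinuousOn {d : ℕ} {E : Type*} [NormedAddCommGroup E]
    (f : ℝ × Pth d → E) (S : Set (ℝ × Pth d)) : Prop :=
  ∀ p ∈ S, ∀ ε > (0:ℝ), ∃ δ > (0:ℝ), ∀ q ∈ S, dInfty p q < δ → ‖f q - f p‖ < ε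

/-- Uniform continuity on a set w.r.t. `d_∞`. -/
def DUnifContOn {d : ℕ} {E : Type*} [NormedAddCommGroup E]
    (f : ℝ × Pth d → E) (S : Set (ℝ × Pth d)) : Prop :=
  ∀ ε > (0:ℝ), ∃ δ > (0:ℝ), ∀ p ∈ S, ∀ q ∈ S, dInfty p q < δ → ‖f q - f p‖ < ε

def BoundedOn {d : ℕ} {E : Type*} [NormedAddCommGroup E]
    (f : ℝ × Pth d → E) (S : Set (ℝ × Pth d)) : Prop :=
  ∃ M : ℝ, ∀ p ∈ S, ‖f p‖ ≤ M

def PolyGrowthOn {d : ℕ} {E : Type*} [NormedAddCommGroup E]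
    (f : ℝ × Pth d → E) (S : Set (ℝ × Pth d)) : Prop :=
  ∃ C : ℝ, ∃ k : ℕ, ∀ p ∈ S, ‖f p‖ ≤ C * (1 + |p.1| + normC p.2) ^ k

/-- `f ∈ C_p^{1,2}(Λ̂^t)`, with prescribed pathwise derivatives. -/
structure IsCp12Hat (d : ℕ) (t : ℝ) (f : ℝ × Pth d → ℝ) (ft : ℝ × Pth d → ℝ)
    (fx : ℝ × Pth d → Eucl d) (fxx : ℝ × Pth d → Matrix (Fin d) (Fin d) ℝ) : Prop where
  horiz : ∀ p ∈ LamHat d t, HasHorizDerivAt f p (ft p)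
  vert : ∀ p ∈ LamHat d t, ∀ i, HasVertDerivAt f p i (fx p i)
  vert2 : ∀ p ∈ LamHat d t, ∀ i j, HasVertDerivAt (fun q => fx q j) p i (fxx p i j)
  cont : DContinuousOn f (LamHat d t)
  cont_t : DContinuousOn ft (LamHat d t)
  cont_x : DContinuousOn fx (LamHat d t)
  cont_xx : ∀ i j, DContinuousOn (fun p => fxx p i j) (LamHat d t)
  growth : PolyGrowthOn f (LamHat d t)
  growth_t : PolyGrowthOn ft (LamHat d t)
  growth_x : PolyGrowthOn fx (LamHat d t)
  growth_xx : ∀ i j, PolyGrowthOn (fun p => fxx p i j) (LamHat d t)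

/-- Hilbert–Schmidt norm of a matrix. -/
def hsNorm {m n : ℕ} (A : Matrix (Fin m) (Fin n) ℝ) : ℝ :=
  Real.sqrt (∑ i, ∑ j, (A i j) ^ 2)

/-- The Hamiltonian `H`. -/
def Ham {d n : ℕ} {U : Type*} (b : Pth d → U → Eucl d)
    (σ' : Pth d → U → Matrix (Fin d) (Fin n) ℝ) (q : Pth d → U → ℝ)
    (x : Pth d) (p : Eucl d) (l : Matrix (Fin d) (Fin d) ℝ) : ℝ :=
  ⨅ u : U, ((inner ℝ p (b x u) : ℝ) + (1/2) * (l * (σ' x u * (σ' x u)ᵀ)).trace + q x u)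

/-- Hypothesis 4.2. -/
structure Hyp42 {d n : ℕ} {U : Type*} [PseudoMetricSpace U] (L : ℝ)
    (b : Pth d → U → Eucl d) (σ' : Pth d → U → Matrix (Fin d) (Fin n) ℝ)
    (q : Pth d → U → ℝ) : Prop where
  pos : 0 < L
  continuous : ∀ x ∈ C0 d, ∀ u : U, ∀ ε > (0:ℝ), ∃ δ > (0:ℝ), ∀ y ∈ C0 d, ∀ u' : U,
    normC (x - y) < δ → dist u u' < δ →
    ‖b x u - b y u'‖ < ε ∧ hsNorm (σ' x u - σ' y u') < ε ∧ |q x u - q y u'| < ε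
  bound_b : ∀ x ∈ C0 d, ∀ u : U, ‖b x u‖ ^ 2 ≤ L ^ 2 * (1 + normC x ^ 2)
  bound_σ : ∀ x ∈ C0 d, ∀ u : U, hsNorm (σ' x u) ^ 2 ≤ L ^ 2 * (1 + normC x ^ 2)
  bound_q : ∀ x ∈ C0 d, ∀ u : U, (q x u) ^ 2 ≤ L ^ 2 * (1 + normC x ^ 2)
  lip_b : ∀ x ∈ C0 d, ∀ y ∈ C0 d, ∀ u : U, ‖b x u - b y u‖ ≤ L * normC (x - y)
  lip_σ : ∀ x ∈ C0 d, ∀ y ∈ C0 d, ∀ u : U, hsNorm (σ' x u - σ' y u) ≤ L * normC (x - y)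
  lip_q : ∀ x ∈ C0 d, ∀ y ∈ C0 d, ∀ u : U, |q x u - q y u| ≤ L * normC (x - y)

/-- Viscosity subsolution of `-λ w + ∂_t w + H(x, ∂_x w, ∂_{xx} w) = 0`. -/
def IsViscSubsol {d n : ℕ} {U : Type*} (lam : ℝ) (b : Pth d → U → Eucl d)
    (σ' : Pth d → U → Matrix (Fin d) (Fin n) ℝ) (q : Pth d → U → ℝ)
    (w : Pth d → ℝ) : Prop :=
  ∀ s : ℝ, 0 ≤ s → ∀ x ∈ C0 d,
    ∀ (φ φt : ℝ × Pth d → ℝ) (φx : ℝ × Pth d → Eucl d)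
      (φxx : ℝ × Pth d → Matrix (Fin d) (Fin d) ℝ),
      IsCp12Hat d s φ φt φx φxx →
      w x - φ (s, x) = 0 →
      (∀ p ∈ Lam d s, w p.2 - φ p ≤ 0) →
      0 ≤ -lam * w x + φt (s, x) + Ham b σ' q x (φx (s, x)) (φxx (s, x))

/-- Viscosity supersolution. -/
def IsViscSupersol {d n : ℕ} {U : Type*} (lam : ℝ) (b : Pth d → U → Eucl d)
    (σ' : Pth d → U → Matrix (Fin d) (Fin n) ℝ) (q : Pth d → U → ℝ)
    (w : Pth d → ℝ) : Prop :=
  ∀ s : ℝ, 0 ≤ s → ∀ x ∈ C0 d,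
    ∀ (φ φt : ℝ × Pth d → ℝ) (φx : ℝ × Pth d → Eucl d)
      (φxx : ℝ × Pth d → Matrix (Fin d) (Fin d) ℝ),
      IsCp12Hat d s φ φt φx φxx →
      w x + φ (s, x) = 0 →
      (∀ p ∈ Lam d s, 0 ≤ w p.2 + φ p) →
      -lam * w x - φt (s, x) + Ham b σ' q x (-φx (s, x)) (-φxx (s, x)) ≤ 0


/-- The two-argument functional `S_m(t,x,s,y)`. -/
def SmP {d : ℕ} (m : ℕ) (p q : ℝ × Pth d) : ℝ :=
  if normC (shift p.2 (max (q.1 - p.1) 0) - shift q.2 (max (p.1 - q.1) 0)) = 0 then 0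
  else (normC (shift p.2 (max (q.1 - p.1) 0) - shift q.2 (max (p.1 - q.1) 0)) ^ (2*m)
        - ‖p.2 zeroPt - q.2 zeroPt‖ ^ (2*m)) ^ 3
       / normC (shift p.2 (max (q.1 - p.1) 0) - shift q.2 (max (p.1 - q.1) 0)) ^ (4*m)

/-- `Υ^{m,M}(t,x,s,y)`. -/
def UpsP {d : ℕ} (m : ℕ) (M : ℝ) (p q : ℝ × Pth d) : ℝ :=
  SmP m p q + M * ‖p.2 zeroPt - q.2 zeroPt‖ ^ (2*m)

/-- `Ῡ^{m,M}(t,x,s,y) = Υ^{m,M}(t,x,s,y) + |s-t|²`. -/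
def UpsBarP {d : ℕ} (m : ℕ) (M : ℝ) (p q : ℝ × Pth d) : ℝ :=
  UpsP m M p q + (q.1 - p.1) ^ 2

/-- The single-path functional `Υ^{m,M}(x)`. -/
def Ups0 {d : ℕ} (m : ℕ) (M : ℝ) (x : Pth d) : ℝ :=
  (if normC x = 0 then 0
   else (normC x ^ (2*m) - ‖x zeroPt‖ ^ (2*m)) ^ 3 / normC x ^ (4*m))
  + M * ‖x zeroPt‖ ^ (2*m)

/-- `w̃^{t̂}` before taking the upper semicontinuous envelope:
the sup of `w(t,ξ)` over `ξ ∈ 𝒞₀` with `ξ(0) = x₀`. -/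
def sliceSup {d : ℕ} (w : ℝ × Pth d → ℝ) (t : ℝ) (x0 : Eucl d) : ℝ :=
  sSup {r : ℝ | ∃ ξ ∈ C0 d, ξ zeroPt = x0 ∧ r = w (t, ξ)}

def tildeW {d : ℕ} (w : ℝ × Pth d → ℝ) (tHat : ℝ) : ℝ × Eucl d → ℝ := fun p =>
  if tHat ≤ p.1 then sliceSup w p.1 p.2
  else sliceSup w tHat p.2 - Real.sqrt (tHat - p.1)

/-- Upper semicontinuous envelope. -/
def uscEnv {d : ℕ} (g : ℝ × Eucl d → ℝ) : ℝ × Eucl d → ℝ := fun p =>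
  Filter.limsup g (nhds p)

/-- A local modulus of continuity. -/
structure LocalModulus (ρ : ℝ → ℝ → ℝ) : Prop where
  cont : Continuous fun p : ℝ × ℝ => ρ p.1 p.2
  nonneg : ∀ t r, 0 ≤ t → 0 ≤ r → 0 ≤ ρ t r
  zero : ∀ r, 0 ≤ r → ρ 0 r = 0
  subadd : ∀ t s r, 0 ≤ t → 0 ≤ s → 0 ≤ r → ρ (t + s) r ≤ ρ t r + ρ s r
  mono : ∀ t r r', 0 ≤ t → 0 ≤ r → r ≤ r' → ρ t r ≤ ρ t r'

/-- Upper semicontinuity on a set w.r.t. `d_∞`. -/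
def DUSCOn {d : ℕ} (w : ℝ × Pth d → ℝ) (S : Set (ℝ × Pth d)) : Prop :=
  ∀ p ∈ S, ∀ ε > (0:ℝ), ∃ δ > (0:ℝ), ∀ q ∈ S, dInfty p q < δ → w q < w p + ε

def BddAboveOn {d : ℕ} (w : ℝ × Pth d → ℝ) (S : Set (ℝ × Pth d)) : Prop :=
  ∃ M : ℝ, ∀ p ∈ S, w p ≤ M

/-- `limsup_{t+|x|_C → ∞} w(t,x)/(t+|x|_C) < 0` on `Λ`. -/
def NegLimsupAtInfty {d : ℕ} (w : ℝ × Pth d → ℝ) : Prop :=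
  ∃ c < (0:ℝ), ∃ R : ℝ, ∀ p ∈ Lam d 0, R ≤ p.1 + normC p.2 →
    w p ≤ c * (p.1 + normC p.2)

/-- `φ ∈ C^{1,2}([0,∞) × ℝ^d)` with prescribed derivatives. -/
structure IsC12Fin (d : ℕ) (φ φt : ℝ × Eucl d → ℝ) (φx : ℝ × Eucl d → Eucl d)
    (φxx : ℝ × Eucl d → Matrix (Fin d) (Fin d) ℝ) : Prop where
  ht : ∀ p : ℝ × Eucl d, HasDerivAt (fun s => φ (s, p.2)) (φt p) p.1
  hx : ∀ p : ℝ × Eucl d, HasGradientAt (fun y => φ (p.1, y)) (φx p) p.2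
  hxx : ∀ p : ℝ × Eucl d, ∀ i j,
    HasDerivAt (fun h : ℝ => φx (p.1, p.2 + h • stdBasis d j) i) (φxx p i j) 0
  cont : Continuous φ
  cont_t : Continuous φt
  cont_x : Continuous φx
  cont_xx : ∀ i j, Continuous fun p => φxx p i j

/-- The class `Φ(t̂, x̂₀, T)` of Definition 6.1. -/
def PhiClass (d : ℕ) (tHat : ℝ) (xHat0 : Eucl d) (T : ℝ) (f : ℝ × Eucl d → ℝ) : Prop :=
  ∃ r > (0:ℝ), ∀ L > (0:ℝ),
    ∀ (φ φt : ℝ × Eucl d → ℝ) (φx : ℝ × Eucl d → Eucl d)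
      (φxx : ℝ × Eucl d → Matrix (Fin d) (Fin d) ℝ),
      IsC12Fin d φ φt φx φxx →
      ∀ t : ℝ, ∀ x0 : Eucl d, 0 < t → t < T →
        (∀ s : ℝ, ∀ y : Eucl d, 0 ≤ s → s ≤ T → f (s, y) - φ (s, y) ≤ f (t, x0) - φ (t, x0)) →
        ∃ C > (0:ℝ),
          (|t - tHat| + ‖x0 - xHat0‖ < r →
           |f (t, x0)| + ‖φx (t, x0)‖ + hsNorm (φxx (t, x0)) ≤ L →
           C ≤ φt (t, x0))

/-- Operator norm of a square matrix, via the associated Euclidean linear map. -/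
def matOpNorm {ι : Type*} [Fintype ι] [DecidableEq ι] (A : Matrix ι ι ℝ) : ℝ :=
  ‖LinearMap.toContinuousLinearMap (Matrix.toEuclideanLin A)‖

/-- The second-derivative matrix of `φ : ℝ^d × ℝ^d → ℝ` at a point, as a
`(2d) × (2d)` matrix indexed by `Fin d ⊕ Fin d`. -/
def hess2 {d : ℕ} (φ : Eucl d × Eucl d → ℝ) (z : Eucl d × Eucl d) :
    Matrix (Fin d ⊕ Fin d) (Fin d ⊕ Fin d) ℝ := fun k l =>
  iteratedFDeriv ℝ 2 φ z
    ![Sum.elim (fun i => ((stdBasis d i, 0) : Eucl d × Eucl d))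
        (fun j => ((0, stdBasis d j) : Eucl d × Eucl d)) k,
      Sum.elim (fun i => ((stdBasis d i, 0) : Eucl d × Eucl d))
        (fun j => ((0, stdBasis d j) : Eucl d × Eucl d)) l]

/-- Hessian matrix of `φ : ℝ^d → ℝ`. -/
def hess1 {d : ℕ} (φ : Eucl d → ℝ) (z : Eucl d) : Matrix (Fin d) (Fin d) ℝ := fun i j =>
  iteratedFDeriv ℝ 2 φ z ![stdBasis d i, stdBasis d j]


/-- The path `x - a_{t-t̂}` appearing in `S_m(t,x,t̂,a)` (for `t ≥ t̂`). -/
def zRel {d : ℕ} (tHat : ℝ) (a : Pth d) (p : ℝ × Pth d) : Pth d :=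
  shift p.2 (max (tHat - p.1) 0) - shift a (max (p.1 - tHat) 0)


-- ## Auxiliary lemmas for Statement 16

instance : Nonempty PathDom := ⟨zeroPt⟩
def IsBdd (x : Pth d) : Prop := BddAbove (Set.range fun θ => ‖x θ‖)
lemma normC_nonneg (x : Pth d) : 0 ≤ normC x := Real.iSup_nonneg fun _ => norm_nonneg _
lemma le_normC {x : Pth d} (hx : IsBdd x) (θ : PathDom) : ‖x θ‖ ≤ normC x := le_ciSup hx θ
def proj (s τ : ℝ) : PathDom := ⟨min (τ - s) 0, Set.mem_Iic.mpr (min_le_right _ _)⟩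
noncomputable def emb (p : ℝ × Pth d) : ℝ → Eucl d := fun τ => p.2 (proj p.1 τ)
lemma proj_val (s τ : ℝ) : (proj s τ).1 = min (τ - s) 0 := rfl
lemma emb_at (p : ℝ × Pth d) (θ : PathDom) : emb p (θ.1 + p.1) = p.2 θ :=
  congrArg p.2 (Subtype.ext (by rw [proj_val, add_sub_cancel_right]; exact min_eq_left θ.2))
lemma emb_min (p : ℝ × Pth d) {T : ℝ} (hT : p.1 ≤ T) (τ : ℝ) :
    emb p (min τ T) = emb p τ := by
  refine congrArg p.2 (Subtype.ext ?_)
  rw [proj_val, proj_val]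
  rcases le_total τ T with h | h
  · rw [min_eq_left h]
  · rw [min_eq_right h, min_eq_right (sub_nonneg.mpr hT),
      min_eq_right (sub_nonneg.mpr (hT.trans h))]
lemma emb_const {p : ℝ × Pth d} {τ : ℝ} (h : p.1 ≤ τ) : emb p τ = p.2 zeroPt :=
  congrArg p.2 (Subtype.ext (by rw [proj_val]; exact min_eq_right (sub_nonneg.mpr h)))
lemma norm_emb_le {p : ℝ × Pth d} (hb : IsBdd p.2) (τ : ℝ) : ‖emb p τ‖ ≤ normC p.2 :=
  le_normC hb _
lemma shift_eq_emb (p : ℝ × Pth d) {T : ℝ} (θ : PathDom) :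
    shift p.2 (T - p.1) θ = emb p (θ.1 + T) := by
  rw [shift]
  split_ifs with hc
  · exact (emb_const (by linarith)).symm
  · push_neg at hc
    refine congrArg p.2 (Subtype.ext ?_)
    rw [proj_val]
    show θ.1 + (T - p.1) = min (θ.1 + T - p.1) 0
    rw [min_eq_left (by linarith)]
    ring

lemma shift_zero (x : Pth d) : shift x 0 = x := by
  funext θ
  rw [shift]
  split_ifs with hc
  · refine (congrArg x (Subtype.ext ?_)).symm
    show (θ : ℝ) = (0:ℝ)
    exact le_antisymm θ.2 (by simpa using hc)
  · exact congrArg x (Subtype.ext (add_zero _))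

/-- The sup distance between the two embedded paths. -/
noncomputable def pairSup (p q : ℝ × Pth d) : ℝ := ⨆ τ : ℝ, ‖emb p τ - emb q τ‖

lemma pairSup_nonneg (p q : ℝ × Pth d) : 0 ≤ pairSup p q :=
  Real.iSup_nonneg fun _ => norm_nonneg _

lemma pairSup_comm (p q : ℝ × Pth d) : pairSup p q = pairSup q p := by
  unfold pairSup
  exact congrArg _ (funext fun τ => norm_sub_rev _ _)

lemma normC_form (p q : ℝ × Pth d) :
    normC (shift p.2 (max (q.1 - p.1) 0) - shift q.2 (max (p.1 - q.1) 0)) = pairSup p q := by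
  set T := max p.1 q.1 with hT
  have hpT : p.1 ≤ T := le_max_left _ _
  have hqT : q.1 ≤ T := le_max_right _ _
  have h1 : max (q.1 - p.1) 0 = T - p.1 := by
    rcases le_total p.1 q.1 with h | h
    · rw [max_eq_left (sub_nonneg.mpr h), hT, max_eq_right h]
    · rw [max_eq_right (sub_nonpos.mpr h), hT, max_eq_left h, sub_self]
  have h2 : max (p.1 - q.1) 0 = T - q.1 := by
    rcases le_total q.1 p.1 with h | h
    · rw [max_eq_left (sub_nonneg.mpr h), hT, max_eq_left h]
    · rw [max_eq_right (sub_nonpos.mpr h), hT, max_eq_right h, sub_self]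
  rw [h1, h2]
  have hpt : (fun θ : PathDom => ‖(shift p.2 (T - p.1) - shift q.2 (T - q.1)) θ‖)
      = fun θ : PathDom => ‖emb p (θ.1 + T) - emb q (θ.1 + T)‖ := by
    funext θ
    rw [Pi.sub_apply, shift_eq_emb, shift_eq_emb]
  rw [normC, hpt, pairSup]
  rw [← sSup_range, ← sSup_range]
  congr 1
  ext v
  constructor
  · rintro ⟨θ, rfl⟩; exact ⟨θ.1 + T, rfl⟩
  · rintro ⟨τ, rfl⟩
    refine ⟨⟨min τ T - T, Set.mem_Iic.mpr (sub_nonpos.mpr (min_le_right _ _))⟩, ?_⟩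
    show ‖emb p (min τ T - T + T) - emb q (min τ T - T + T)‖ = _
    rw [sub_add_cancel, emb_min p hpT, emb_min q hqT]

lemma dInfty_emb (p q : ℝ × Pth d) : dInfty p q = |q.1 - p.1| + pairSup p q := by
  rw [dInfty]
  split_ifs with h
  · have e := normC_form p q
    rw [max_eq_left (sub_nonneg.mpr h), max_eq_right (sub_nonpos.mpr h), shift_zero] at e
    rw [e]
  · push_neg at h
    have e := normC_form q p
    rw [max_eq_left (sub_nonneg.mpr h.le), max_eq_right (sub_nonpos.mpr h.le), shift_zero] at e
    rw [e, pairSup_comm q p, abs_sub_comm p.1 q.1]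

lemma dInfty_nonneg (p q : ℝ × Pth d) : 0 ≤ dInfty p q := by
  rw [dInfty_emb]; exact add_nonneg (abs_nonneg _) (pairSup_nonneg _ _)

lemma dInfty_symm (p q : ℝ × Pth d) : dInfty p q = dInfty q p := by
  rw [dInfty_emb, dInfty_emb, abs_sub_comm, pairSup_comm]

lemma dInfty_self (p : ℝ × Pth d) : dInfty p p = 0 := by
  rw [dInfty_emb, sub_self, abs_zero, zero_add, pairSup]
  simp

lemma bdd_pair {p q : ℝ × Pth d} (hp : IsBdd p.2) (hq : IsBdd q.2) :
    BddAbove (Set.range fun τ : ℝ => ‖emb p τ - emb q τ‖) := by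
  refine ⟨normC p.2 + normC q.2, ?_⟩
  rintro v ⟨τ, rfl⟩
  exact (norm_sub_le _ _).trans (add_le_add (norm_emb_le hp τ) (norm_emb_le hq τ))

lemma le_pairSup {p q : ℝ × Pth d} (hp : IsBdd p.2) (hq : IsBdd q.2) (τ : ℝ) :
    ‖emb p τ - emb q τ‖ ≤ pairSup p q := le_ciSup (bdd_pair hp hq) τ

lemma dInfty_triangle {p q r : ℝ × Pth d} (hp : IsBdd p.2) (hq : IsBdd q.2) (hr : IsBdd r.2) :
    dInfty p r ≤ dInfty p q + dInfty q r := by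
  rw [dInfty_emb, dInfty_emb, dInfty_emb]
  have h1 : |r.1 - p.1| ≤ |r.1 - q.1| + |q.1 - p.1| := abs_sub_le r.1 q.1 p.1
  have h2 : pairSup p r ≤ pairSup p q + pairSup q r := by
    refine Real.iSup_le (fun τ => ?_)
      (add_nonneg (pairSup_nonneg _ _) (pairSup_nonneg _ _))
    exact (norm_sub_le_norm_sub_add_norm_sub _ (emb q τ) _).trans
      (add_le_add (le_pairSup hp hq τ) (le_pairSup hq hr τ))
  linarith

lemma dInfty_eq_zero_iff {p q : ℝ × Pth d} (hp : IsBdd p.2) (hq : IsBdd q.2) :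
    dInfty p q = 0 ↔ p = q := by
  constructor
  · intro h
    rw [dInfty_emb] at h
    have h1 : |q.1 - p.1| = 0 := le_antisymm (by nlinarith [pairSup_nonneg p q, abs_nonneg (q.1 - p.1)]) (abs_nonneg _)
    have h2 : pairSup p q = 0 := by linarith [abs_nonneg (q.1 - p.1), pairSup_nonneg p q]
    have ht : p.1 = q.1 := by have := abs_eq_zero.mp h1; linarith
    have hx : p.2 = q.2 := by
      funext θ
      have h3 : ‖emb p (θ.1 + p.1) - emb q (θ.1 + p.1)‖ ≤ 0 :=
        (le_pairSup hp hq _).trans (le_of_eq h2)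
      have h4 : emb p (θ.1 + p.1) = emb q (θ.1 + p.1) := by
        rwa [norm_le_zero_iff, sub_eq_zero] at h3
      rw [emb_at p θ] at h4
      rw [h4, ht, emb_at q θ]
    exact Prod.ext ht hx
  · rintro rfl
    exact dInfty_self p

lemma D0_of_C0 {x : Pth d} (hx : x ∈ C0 d) : x ∈ D0 d := by
  obtain ⟨hc, hb⟩ := hx
  exact ⟨⟨fun θ => hc.continuousAt.continuousWithinAt,
    fun θ => ⟨x θ, hc.continuousAt.continuousWithinAt⟩⟩, hb⟩

lemma bdd_of_D0 {x : Pth d} (hx : x ∈ D0 d) : IsBdd x := by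
  obtain ⟨⟨hrc, hll⟩, hbot⟩ := hx
  have h1 : ∀ᶠ θ in (atBot : Filter PathDom), ‖x θ‖ < 1 := by
    have := NormedAddCommGroup.tendsto_nhds_zero.mp hbot 1 one_pos
    exact this
  obtain ⟨a, ha⟩ := eventually_atBot.mp h1
  set S : Set PathDom := Subtype.val ⁻¹' Set.Icc a.1 0 with hS
  have hScomp : IsCompact S :=
    (IsClosedEmbedding.subtypeVal isClosed_Iic).isCompact_preimage isCompact_Icc
  have hloc : ∀ θ : PathDom, {η | ‖x η‖ ≤ max (‖x θ‖ + 1) (‖(hll θ).choose‖ + 1)} ∈ 𝓝 θ := by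
    intro θ
    set M := max (‖x θ‖ + 1) (‖(hll θ).choose‖ + 1) with hM
    have hr : ∀ᶠ η in 𝓝[{η : PathDom | θ.1 ≤ η.1}] θ, ‖x η‖ ≤ M := by
      have : Tendsto (fun η => ‖x η‖) (𝓝[{η : PathDom | θ.1 ≤ η.1}] θ) (𝓝 ‖x θ‖) :=
        (continuous_norm.tendsto _).comp (hrc θ)
      filter_upwards [this.eventually_lt_const (show ‖x θ‖ < ‖x θ‖ + 1 by linarith)] with η hη
      exact hη.le.trans (le_max_left _ _)
    have hl : ∀ᶠ η in 𝓝[{η : PathDom | η.1 < θ.1}] θ, ‖x η‖ ≤ M := by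
      have : Tendsto (fun η => ‖x η‖) (𝓝[{η : PathDom | η.1 < θ.1}] θ)
          (𝓝 ‖(hll θ).choose‖) := (continuous_norm.tendsto _).comp (hll θ).choose_spec
      filter_upwards [this.eventually_lt_const
        (show ‖(hll θ).choose‖ < ‖(hll θ).choose‖ + 1 by linarith)] with η hη
      exact hη.le.trans (le_max_right _ _)
    have hcup : ({η : PathDom | η.1 < θ.1} ∪ {η : PathDom | θ.1 ≤ η.1}) = Set.univ := by
      ext η; simp only [Set.mem_union, Set.mem_setOf_eq, Set.mem_univ, iff_true]; exact lt_or_ge _ _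
    have : ∀ᶠ η in 𝓝 θ, ‖x η‖ ≤ M := by
      rw [← nhdsWithin_univ, ← hcup, nhdsWithin_union, eventually_sup]
      exact ⟨hl, hr⟩
    exact this
  obtain ⟨tfin, -, hcov⟩ := hScomp.elim_nhds_subcover _ (fun θ _ => hloc θ)
  have hz : zeroPt ∈ S := by
    simp only [hS, Set.mem_preimage, Set.mem_Icc]
    exact ⟨a.2, le_refl 0⟩
  have hne : tfin.Nonempty := by
    rcases Finset.eq_empty_or_nonempty tfin with h | h
    · exfalso; have := hcov hz; rw [h] at this; simpa using this
    · exact h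
  set B := tfin.sup' hne (fun θ => max (‖x θ‖ + 1) (‖(hll θ).choose‖ + 1)) with hB
  refine ⟨max 1 B, ?_⟩
  rintro v ⟨θ, rfl⟩
  rcases le_total θ.1 a.1 with hθ | hθ
  · exact le_max_of_le_left (ha θ (Subtype.coe_le_coe.mp hθ)).le
  · have : θ ∈ S := by
      simp only [hS, Set.mem_preimage, Set.mem_Icc]
      exact ⟨hθ, θ.2⟩
    obtain ⟨σ, hσt, hσ⟩ := Set.mem_iUnion₂.mp (hcov this)
    exact le_max_of_le_right (le_trans hσ (Finset.le_sup' (fun θ => max (‖x θ‖ + 1) (‖(hll θ).choose‖ + 1)) hσt))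

lemma proj_continuous (s : ℝ) : Continuous fun τ => proj s τ :=
  Continuous.subtype_mk ((continuous_id.sub continuous_const).min continuous_const) _

lemma emb_rightCont {p : ℝ × Pth d} (hp : IsCadlag p.2) (τ : ℝ) :
    ContinuousWithinAt (emb p) (Set.Ici τ) τ := by
  have hf : Tendsto (fun σ => proj p.1 σ) (𝓝[Set.Ici τ] τ)
      (𝓝[{η : PathDom | (proj p.1 τ).1 ≤ η.1}] (proj p.1 τ)) := by
    rw [tendsto_nhdsWithin_iff]
    constructor
    · exact ((proj_continuous p.1).tendsto τ).mono_left nhdsWithin_le_nhds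
    · refine eventually_nhdsWithin_of_forall fun σ hσ => ?_
      show (proj p.1 τ).1 ≤ (proj p.1 σ).1
      rw [proj_val, proj_val]
      exact min_le_min (sub_le_sub_right hσ _) le_rfl
  exact Filter.Tendsto.comp (hp.1 (proj p.1 τ)) hf

lemma emb_leftLim {p : ℝ × Pth d} (hp : IsCadlag p.2) (τ : ℝ) :
    ∃ L, Tendsto (emb p) (𝓝[<] τ) (𝓝 L) := by
  rcases le_or_gt τ p.1 with hτ | hτ
  · set θ0 : PathDom := ⟨τ - p.1, Set.mem_Iic.mpr (sub_nonpos.mpr hτ)⟩ with hθ0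
    obtain ⟨L, hL⟩ := hp.2 θ0
    refine ⟨L, hL.comp ?_⟩
    rw [tendsto_nhdsWithin_iff]
    constructor
    · have h1 : proj p.1 τ = θ0 := Subtype.ext (by rw [proj_val]; exact min_eq_left (sub_nonpos.mpr hτ))
      have := ((proj_continuous p.1).tendsto τ).mono_left (nhdsWithin_le_nhds (s := Set.Iio τ))
      rwa [h1] at this
    · refine eventually_nhdsWithin_of_forall fun σ hσ => ?_
      show (proj p.1 σ).1 < θ0.1
      rw [proj_val]
      have hσ' : σ < τ := hσ
      calc min (σ - p.1) 0 ≤ σ - p.1 := min_le_left _ _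
        _ < τ - p.1 := by linarith
  · refine ⟨p.2 zeroPt, Tendsto.congr' ?_ tendsto_const_nhds⟩
    filter_upwards [Ioo_mem_nhdsLT_of_mem (Set.mem_Ioc.mpr ⟨hτ, le_refl τ⟩)] with σ hσ
    exact (emb_const hσ.1.le).symm

lemma emb_continuous {p : ℝ × Pth d} (hp : Continuous p.2) : Continuous (emb p) :=
  hp.comp (proj_continuous p.1)

/-- Uniform limit of right-continuous functions is right-continuous. -/
lemma unif_rightCont {f : ℕ → ℝ → Eucl d} {X : ℝ → Eucl d}
    (hf : ∀ k τ, ContinuousWithinAt (f k) (Set.Ici τ) τ)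
    (hu : ∀ ε > (0:ℝ), ∃ N, ∀ k ≥ N, ∀ τ, ‖f k τ - X τ‖ ≤ ε) (τ : ℝ) :
    ContinuousWithinAt X (Set.Ici τ) τ := by
  rw [ContinuousWithinAt, Metric.tendsto_nhds]
  intro ε hε
  obtain ⟨N, hN⟩ := hu (ε/4) (by linarith)
  have h1 : ∀ᶠ σ in 𝓝[Set.Ici τ] τ, dist (f N σ) (f N τ) < ε/4 :=
    Metric.tendsto_nhds.mp (hf N τ) (ε/4) (by linarith)
  filter_upwards [h1] with σ hσ
  have d1 : dist (X σ) (f N σ) ≤ ε/4 := by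
    rw [dist_comm, dist_eq_norm]; exact hN N le_rfl σ
  have d3 : dist (f N τ) (X τ) ≤ ε/4 := by rw [dist_eq_norm]; exact hN N le_rfl τ
  calc dist (X σ) (X τ) ≤ dist (X σ) (f N σ) + dist (f N σ) (f N τ) + dist (f N τ) (X τ) :=
        dist_triangle4 _ _ _ _
    _ < ε := by linarith

/-- Uniform limit of functions with left limits has left limits. -/
lemma unif_leftLim {f : ℕ → ℝ → Eucl d} {X : ℝ → Eucl d}
    (hf : ∀ k τ, ∃ L, Tendsto (f k) (𝓝[<] τ) (𝓝 L))
    (hu : ∀ ε > (0:ℝ), ∃ N, ∀ k ≥ N, ∀ τ, ‖f k τ - X τ‖ ≤ ε) (τ : ℝ) :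
    ∃ L, Tendsto X (𝓝[<] τ) (𝓝 L) := by
  have hC : Cauchy (Filter.map X (𝓝[<] τ)) := by
    rw [Metric.cauchy_iff]
    refine ⟨Filter.map_neBot, fun ε hε => ?_⟩
    obtain ⟨N, hN⟩ := hu (ε/5) (by linarith)
    obtain ⟨L, hL⟩ := hf N τ
    have hE : {σ | dist (f N σ) L < ε/5} ∈ 𝓝[<] τ :=
      Metric.tendsto_nhds.mp hL (ε/5) (by linarith)
    refine ⟨X '' {σ | dist (f N σ) L < ε/5}, Filter.image_mem_map hE, ?_⟩
    rintro _ ⟨σ, hσ, rfl⟩ _ ⟨σ', hσ', rfl⟩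
    have d1 : dist (X σ) (f N σ) ≤ ε/5 := by rw [dist_comm, dist_eq_norm]; exact hN N le_rfl σ
    have d4 : dist (f N σ') (X σ') ≤ ε/5 := by rw [dist_eq_norm]; exact hN N le_rfl σ'
    calc dist (X σ) (X σ') ≤ dist (X σ) (f N σ) + dist (f N σ) (f N σ') + dist (f N σ') (X σ') :=
          dist_triangle4 _ _ _ _
      _ ≤ ε/5 + (dist (f N σ) L + dist L (f N σ')) + ε/5 := by
          gcongr; exact dist_triangle _ _ _
      _ < ε := by
          rw [dist_comm L] at *
          have := hσ; have := hσ'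
          simp only [Set.mem_setOf_eq] at *
          linarith
  obtain ⟨L, hL⟩ := CompleteSpace.complete hC
  exact ⟨L, hL⟩

lemma complete_aux (t : ℝ) (u : ℕ → ℝ × Pth d) (hu : ∀ k, t ≤ (u k).1 ∧ (u k).2 ∈ D0 d)
    (hcau : ∀ ε > (0:ℝ), ∃ N : ℕ, ∀ k ≥ N, ∀ l ≥ N, dInfty (u k) (u l) < ε) :
    ∃ p : ℝ × Pth d, (t ≤ p.1 ∧ p.2 ∈ D0 d) ∧ ((∀ k, Continuous (u k).2) → Continuous p.2) ∧
      Tendsto (fun k => dInfty (u k) p) atTop (𝓝 0) := by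
  have hbdd : ∀ k, IsBdd (u k).2 := fun k => bdd_of_D0 (hu k).2
  have hps : ∀ k l, pairSup (u k) (u l) ≤ dInfty (u k) (u l) := fun k l => by
    rw [dInfty_emb]; linarith [abs_nonneg ((u l).1 - (u k).1)]
  have habs : ∀ k l, |(u l).1 - (u k).1| ≤ dInfty (u k) (u l) := fun k l => by
    rw [dInfty_emb]; linarith [pairSup_nonneg (u k) (u l)]
  -- limit of the times
  have hct : CauchySeq fun k => (u k).1 := by
    rw [Metric.cauchySeq_iff]
    intro ε hε
    obtain ⟨N, hN⟩ := hcau ε hε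
    exact ⟨N, fun m hm n hn => by
      rw [Real.dist_eq]
      exact lt_of_le_of_lt (habs n m) (hN n hn m hm)⟩
  obtain ⟨s, hs⟩ := cauchySeq_tendsto_of_complete hct
  have hts : t ≤ s := ge_of_tendsto' hs fun k => (hu k).1
  -- pointwise limit of the embedded paths
  have hptC : ∀ τ : ℝ, CauchySeq fun k => emb (u k) τ := by
    intro τ
    rw [Metric.cauchySeq_iff]
    intro ε hε
    obtain ⟨N, hN⟩ := hcau ε hε
    refine ⟨N, fun m hm n hn => ?_⟩
    rw [dist_eq_norm]
    exact lt_of_le_of_lt ((le_pairSup (hbdd m) (hbdd n) τ).trans (hps m n)) (hN m hm n hn)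
  choose X hX using fun τ => cauchySeq_tendsto_of_complete (hptC τ)
  -- uniform convergence
  have hunif : ∀ ε > (0:ℝ), ∃ N, ∀ k ≥ N, ∀ τ, ‖emb (u k) τ - X τ‖ ≤ ε := by
    intro ε hε
    obtain ⟨N, hN⟩ := hcau ε hε
    refine ⟨N, fun k hk τ => ?_⟩
    have h1 : Tendsto (fun l => ‖emb (u k) τ - emb (u l) τ‖) atTop (𝓝 ‖emb (u k) τ - X τ‖) :=
      (tendsto_const_nhds.sub (hX τ)).norm
    refine le_of_tendsto h1 ?_
    filter_upwards [eventually_ge_atTop N] with l hl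
    exact ((le_pairSup (hbdd k) (hbdd l) τ).trans (hps k l)).trans (hN k hk l hl).le
  have hXrc : ∀ τ, ContinuousWithinAt X (Set.Ici τ) τ :=
    unif_rightCont (fun k τ => emb_rightCont (hu k).2.1 τ) hunif
  have hXll : ∀ τ, ∃ L, Tendsto X (𝓝[<] τ) (𝓝 L) :=
    unif_leftLim (fun k τ => emb_leftLim (hu k).2.1 τ) hunif
  -- constancy of X to the right of s
  have stepA : ∀ τ σ : ℝ, s < τ → s < σ → X τ = X σ := by
    intro τ σ hτ hσ
    have key : ∀ ε > (0:ℝ), ‖X τ - X σ‖ ≤ ε := by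
      intro ε hε
      obtain ⟨N, hN⟩ := hunif (ε/2) (by linarith)
      have hev : ∀ᶠ k in atTop, (u k).1 < min τ σ := hs.eventually_lt_const (lt_min hτ hσ)
      obtain ⟨k, hk1, hk2⟩ := ((eventually_ge_atTop N).and hev).exists
      have e1 : emb (u k) τ = emb (u k) σ := by
        rw [emb_const (hk2.le.trans (min_le_left _ _)), emb_const (hk2.le.trans (min_le_right _ _))]
      have e2 : X τ - X σ = (X τ - emb (u k) τ) + (emb (u k) σ - X σ) := by rw [e1]; abel
      rw [e2]
      refine (norm_add_le _ _).trans ?_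
      rw [norm_sub_rev (X τ)]
      have := hN k hk1 τ
      have := hN k hk1 σ
      linarith
    have h0 : ‖X τ - X σ‖ ≤ 0 := le_of_forall_pos_le_add fun ε hε => by
      simpa using key ε hε
    rw [← sub_eq_zero]
    exact norm_le_zero_iff.mp h0
  have stepB : X s = X (s + 1) := by
    have key : ∀ ε > (0:ℝ), ‖X s - X (s+1)‖ ≤ ε := by
      intro ε hε
      obtain ⟨N, hN⟩ := hunif (ε/4) (by linarith)
      have h1 : ∀ᶠ σ in 𝓝[>] s, dist (emb (u N) σ) (emb (u N) s) < ε/4 :=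
        (Metric.tendsto_nhds.mp ((emb_rightCont (hu N).2.1 s).mono_left
          (nhdsWithin_mono _ Set.Ioi_subset_Ici_self)) (ε/4) (by linarith))
      have h2 : Set.Ioo s (s+1) ∈ 𝓝[>] s := Ioo_mem_nhdsGT_of_mem ⟨le_refl s, by linarith⟩
      obtain ⟨σ, hσ1, hσ2⟩ := (h1.and (eventually_of_mem h2 fun σ hσ => hσ)).exists
      have hXσ : X σ = X (s+1) := stepA σ (s+1) hσ2.1 (by linarith)
      have e2 : X s - X (s+1) = (X s - emb (u N) s) + (emb (u N) s - emb (u N) σ)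
          + (emb (u N) σ - X σ) := by rw [hXσ]; abel
      rw [e2]
      have n1 : ‖X s - emb (u N) s‖ ≤ ε/4 := by rw [norm_sub_rev]; exact hN N le_rfl s
      have n2 : ‖emb (u N) s - emb (u N) σ‖ ≤ ε/4 := by
        rw [← dist_eq_norm, dist_comm]; exact hσ1.le
      have n3 : ‖emb (u N) σ - X σ‖ ≤ ε/4 := hN N le_rfl σ
      have m1 := norm_add_le (X s - emb (u N) s + (emb (u N) s - emb (u N) σ)) (emb (u N) σ - X σ)
      have m2 := norm_add_le (X s - emb (u N) s) (emb (u N) s - emb (u N) σ)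
      linarith
    have h0 : ‖X s - X (s+1)‖ ≤ 0 := le_of_forall_pos_le_add fun ε hε => by
      simpa using key ε hε
    rw [← sub_eq_zero]
    exact norm_le_zero_iff.mp h0
  have hconst : ∀ τ, s ≤ τ → X τ = X s := by
    intro τ hτ
    rcases eq_or_lt_of_le hτ with h | h
    · rw [← h]
    · rw [stepA τ (s+1) h (by linarith), ← stepB]
  -- the limit point
  set xs : Pth d := fun θ => X (θ.1 + s) with hxs
  have hembp : emb ((s, xs) : ℝ × Pth d) = X := by
    funext τ
    show X (min (τ - s) 0 + s) = X τ
    rcases le_total τ s with h | h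
    · rw [min_eq_left (sub_nonpos.mpr h), sub_add_cancel]
    · rw [min_eq_right (sub_nonneg.mpr h), zero_add]
      exact (hconst τ h).symm
  have hmemD0 : xs ∈ D0 d := by
    refine ⟨⟨fun θ => ?_, fun θ => ?_⟩, ?_⟩
    · -- right continuity
      have hf : Tendsto (fun η : PathDom => η.1 + s) (𝓝[{η : PathDom | θ.1 ≤ η.1}] θ)
          (𝓝[Set.Ici (θ.1 + s)] (θ.1 + s)) := by
        rw [tendsto_nhdsWithin_iff]
        refine ⟨((continuous_subtype_val.add continuous_const).tendsto θ).mono_left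
          nhdsWithin_le_nhds, eventually_nhdsWithin_of_forall fun η hη => ?_⟩
        exact (show (θ:ℝ) + s ≤ (η:ℝ) + s by linarith [show (θ:ℝ) ≤ (η:ℝ) from hη])
      exact Filter.Tendsto.comp (hXrc (θ.1 + s)) hf
    · -- left limits
      obtain ⟨L, hL⟩ := hXll (θ.1 + s)
      refine ⟨L, hL.comp ?_⟩
      rw [tendsto_nhdsWithin_iff]
      refine ⟨((continuous_subtype_val.add continuous_const).tendsto θ).mono_left
        nhdsWithin_le_nhds, eventually_nhdsWithin_of_forall fun η hη => ?_⟩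
      exact (show (η:ℝ) + s < (θ:ℝ) + s by linarith [show (η:ℝ) < (θ:ℝ) from hη])
    · -- vanishing at -∞
      rw [NormedAddCommGroup.tendsto_nhds_zero]
      intro ε hε
      obtain ⟨N, hN⟩ := hunif (ε/3) (by linarith)
      have htail := NormedAddCommGroup.tendsto_nhds_zero.mp (hu N).2.2 (ε/3) (by linarith)
      obtain ⟨a, ha⟩ := eventually_atBot.mp htail
      set b : PathDom := ⟨min (a.1 + (u N).1 - s) 0, Set.mem_Iic.mpr (min_le_right _ _)⟩ with hb
      refine Filter.mem_of_superset (Filter.Iic_mem_atBot b) fun θ hθ => ?_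
      have hθb : θ.1 ≤ a.1 + (u N).1 - s := le_trans hθ (min_le_left _ _)
      have hproj : (proj (u N).1 (θ.1 + s)).1 ≤ a.1 := by
        rw [proj_val]
        exact le_trans (min_le_left _ _) (by linarith)
      have h1 : ‖emb (u N) (θ.1 + s)‖ < ε/3 := ha _ hproj
      have h2 : ‖X (θ.1 + s) - emb (u N) (θ.1 + s)‖ ≤ ε/3 := by
        rw [norm_sub_rev]; exact hN N le_rfl _
      show ‖xs θ‖ < ε
      calc ‖xs θ‖ = ‖(X (θ.1 + s) - emb (u N) (θ.1 + s)) + emb (u N) (θ.1 + s)‖ := by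
            rw [hxs]; simp
        _ ≤ ‖X (θ.1 + s) - emb (u N) (θ.1 + s)‖ + ‖emb (u N) (θ.1 + s)‖ := norm_add_le _ _
        _ < ε := by linarith
  refine ⟨(s, xs), ⟨hts, hmemD0⟩, ?_, ?_⟩
  · -- continuity when all paths are continuous
    intro hcont
    have hXc : Continuous X := by
      have hTU : TendstoUniformly (fun k => emb (u k)) X atTop := by
        rw [Metric.tendstoUniformly_iff]
        intro ε hε
        obtain ⟨N, hN⟩ := hunif (ε/2) (by linarith)
        filter_upwards [eventually_ge_atTop N] with k hk τ
        rw [dist_comm, dist_eq_norm]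
        exact lt_of_le_of_lt (hN k hk τ) (by linarith)
      exact hTU.continuous (Frequently.of_forall fun k => emb_continuous (hcont k))
    exact hXc.comp (continuous_subtype_val.add continuous_const)
  · -- convergence in dInfty
    rw [NormedAddCommGroup.tendsto_nhds_zero]
    intro ε hε
    obtain ⟨N, hN⟩ := hunif (ε/4) (by linarith)
    obtain ⟨N2, hN2⟩ := Metric.tendsto_atTop.mp hs (ε/2) (by linarith)
    filter_upwards [eventually_ge_atTop N, eventually_ge_atTop N2] with k hk hk2
    have h1 : |s - (u k).1| < ε/2 := by
      rw [abs_sub_comm, ← Real.dist_eq]; exact hN2 k hk2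
    have h2 : pairSup (u k) (s, xs) ≤ ε/4 := by
      refine Real.iSup_le (fun τ => ?_) (by linarith)
      rw [show emb ((s, xs) : ℝ × Pth d) τ = X τ from congrFun hembp τ]
      exact hN k hk τ
    have h3 : dInfty (u k) (s, xs) < ε := by
      rw [dInfty_emb]
      show |(s, xs).1 - (u k).1| + pairSup (u k) (s, xs) < ε
      have : |(s, xs).1 - (u k).1| = |s - (u k).1| := rfl
      rw [this]
      linarith
    rw [Real.norm_eq_abs, abs_of_nonneg (dInfty_nonneg _ _)]
    exact h3

/-- `d_∞` is a metric on `Λ̂^t` and on `Λ^t`, and both are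
complete metric spaces. -/
theorem dInfty_metric_and_complete {d : ℕ} (t : ℝ) (ht : 0 ≤ t) :
    (∀ p ∈ LamHat d t, ∀ q ∈ LamHat d t, 0 ≤ dInfty p q) ∧
    (∀ p ∈ LamHat d t, ∀ q ∈ LamHat d t, dInfty p q = dInfty q p) ∧
    (∀ p ∈ LamHat d t, ∀ q ∈ LamHat d t, (dInfty p q = 0 ↔ p = q)) ∧
    (∀ p ∈ LamHat d t, ∀ q ∈ LamHat d t, ∀ r ∈ LamHat d t,
      dInfty p r ≤ dInfty p q + dInfty q r) ∧
    (∀ u : ℕ → ℝ × Pth d, (∀ k, u k ∈ LamHat d t) →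
      (∀ ε > (0:ℝ), ∃ N : ℕ, ∀ k ≥ N, ∀ l ≥ N, dInfty (u k) (u l) < ε) →
      ∃ p ∈ LamHat d t, Filter.Tendsto (fun k => dInfty (u k) p) Filter.atTop (nhds 0)) ∧
    (∀ u : ℕ → ℝ × Pth d, (∀ k, u k ∈ Lam d t) →
      (∀ ε > (0:ℝ), ∃ N : ℕ, ∀ k ≥ N, ∀ l ≥ N, dInfty (u k) (u l) < ε) →
      ∃ p ∈ Lam d t, Filter.Tendsto (fun k => dInfty (u k) p) Filter.atTop (nhds 0)) := by
  constructor
  · exact fun p _ q _ => dInfty_nonneg p q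
  refine ⟨fun p _ q _ => dInfty_symm p q, ?_, ?_, ?_, ?_⟩
  · exact fun p hp q hq => dInfty_eq_zero_iff (bdd_of_D0 hp.2) (bdd_of_D0 hq.2)
  · exact fun p hp q hq r hr =>
      dInfty_triangle (bdd_of_D0 hp.2) (bdd_of_D0 hq.2) (bdd_of_D0 hr.2)
  · intro u hu hcau
    obtain ⟨p, hmem, _, htend⟩ := complete_aux t u (fun k => hu k) hcau
    exact ⟨p, hmem, htend⟩
  · intro u hu hcau
    have hu' : ∀ k, t ≤ (u k).1 ∧ (u k).2 ∈ D0 d :=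
      fun k => ⟨(hu k).1, D0_of_C0 (hu k).2⟩
    obtain ⟨p, ⟨hp1, hp2⟩, hcont, htend⟩ := complete_aux t u hu' hcau
    exact ⟨p, ⟨hp1, hcont (fun k => (hu k).2.1), hp2.2⟩, htend⟩
end PathHJB
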